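/- (Gevrey commutator estimate) Let r ≥ 0, s₁ > 3/2, s > 1/2 and 0 ≤ δ ≤ 1. There exists C such that ‖(f ∂_x g)_Φ − f ∂_x g_Φ‖_{H^r(𝕋)} ≤ C |f|_{X^{s₁}} |g|_{X^{r+2/3}} + C |f|_{X^{r+1-δ}} |g|_{X^{s+δ}}, where h_Φ has Fourier coefficients e^{τ⟨k⟩^{2/3}} ĥ(k) and |h|_{X^a} = ‖h_Φ‖_{H^a(𝕋)}. -/

import Mathlib

set_option maxHeartbeats 1600000

open MeasureTheory

/-- Japanese bracket `⟨k⟩ = (1+k²)^(1/2)` for `k : ℤ`. -/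
noncomputable def jap (k : ℤ) : ℝ := Real.sqrt (1 + (k : ℝ) ^ 2)

/-- The Gevrey `X^r` norm with weight `e^{τ⟨k⟩^(2/3)}` of Fourier coefficients. -/
noncomputable def Xnorm (τ r : ℝ) (f : ℤ → ℂ) : ℝ :=
  Real.sqrt (∑' k : ℤ,
    (jap k ^ r * Real.exp (τ * jap k ^ ((2 : ℝ) / 3)) * ‖f k‖) ^ 2)

/-- Fourier coefficients of the Gevrey commutator `(f ∂_x g)_Φ − f ∂_x g_Φ`. -/
noncomputable def gevreyCommCoef (τ : ℝ) (f g : ℤ → ℂ) (k : ℤ) : ℂ :=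
  ∑' ℓ : ℤ, ((Real.exp (τ * jap k ^ ((2 : ℝ) / 3)) -
      Real.exp (τ * jap ℓ ^ ((2 : ℝ) / 3)) : ℝ) : ℂ) *
    f (k - ℓ) * (Complex.I * (ℓ : ℂ)) * g ℓ


-- from t1.lean
lemma jap_one_le (k : ℤ) : 1 ≤ jap k := by
  have : (1:ℝ) = Real.sqrt 1 := by simp
  rw [jap, this]
  exact Real.sqrt_le_sqrt (by nlinarith [sq_nonneg (k:ℝ)])

lemma jap_pos (k : ℤ) : 0 < jap k := lt_of_lt_of_le one_pos (jap_one_le k)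

lemma jap_nonneg (k : ℤ) : 0 ≤ jap k := (jap_pos k).le

lemma jap_sq (k : ℤ) : jap k ^ 2 = 1 + (k:ℝ) ^ 2 := Real.sq_sqrt (by positivity)

lemma abs_le_jap (k : ℤ) : |(k:ℝ)| ≤ jap k := by
  nlinarith [jap_sq k, jap_nonneg k, abs_nonneg (k:ℝ), sq_abs (k:ℝ)]

lemma jap_add_le (m n : ℤ) : jap (m + n) ≤ jap m + jap n := by
  have h1 : jap (m+n) ^ 2 ≤ (jap m + jap n) ^ 2 := by
    rw [jap_sq]
    have hm := abs_le_jap m; have hn := abs_le_jap n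
    have hmn : (m:ℝ)*n ≤ |(m:ℝ)| * |(n:ℝ)| := (le_abs_self _).trans (abs_mul (m:ℝ) n).le
    push_cast
    nlinarith [jap_nonneg m, jap_nonneg n, abs_nonneg (m:ℝ), abs_nonneg (n:ℝ), jap_sq m, jap_sq n]
  exact (pow_le_pow_iff_left₀ (jap_nonneg _) (by nlinarith [jap_nonneg m, jap_nonneg n]) two_ne_zero).1 h1

-- from t2.lean
lemma cbrt_pow3 (k : ℤ) : (jap k ^ ((1:ℝ)/3)) ^ (3:ℕ) = jap k := by
  rw [← Real.rpow_natCast (jap k ^ ((1:ℝ)/3)) 3, ← Real.rpow_mul (jap_nonneg k)]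
  norm_num

lemma cbrt_sq (k : ℤ) : (jap k ^ ((1:ℝ)/3)) ^ (2:ℕ) = jap k ^ ((2:ℝ)/3) := by
  rw [← Real.rpow_natCast (jap k ^ ((1:ℝ)/3)) 2, ← Real.rpow_mul (jap_nonneg k)]
  norm_num

lemma one_le_cbrt (k : ℤ) : 1 ≤ jap k ^ ((1:ℝ)/3) :=
  Real.one_le_rpow (jap_one_le k) (by norm_num)

lemma cube_root_le {x y : ℝ} (hx : 0 ≤ x) (hy : 0 ≤ y) (h : x ^ (2:ℕ) ≤ y ^ (3:ℕ)) :
    x ^ ((2:ℝ)/3) ≤ y := by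
  have : x ^ ((2:ℝ)/3) = (x ^ (2:ℕ)) ^ ((1:ℝ)/3) := by
    rw [← Real.rpow_natCast x 2, ← Real.rpow_mul hx]; norm_num
  rw [this]
  calc (x ^ (2:ℕ)) ^ ((1:ℝ)/3) ≤ (y ^ (3:ℕ)) ^ ((1:ℝ)/3) :=
        Real.rpow_le_rpow (by positivity) h (by norm_num)
    _ = y := by
        rw [← Real.rpow_natCast y 3, ← Real.rpow_mul hy]; norm_num

lemma jap_23_add (m n : ℤ) :
    jap (m + n) ^ ((2:ℝ)/3) ≤ jap m ^ ((2:ℝ)/3) + jap n ^ ((2:ℝ)/3) := by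
  set p := jap m ^ ((1:ℝ)/3) with hp
  set q := jap n ^ ((1:ℝ)/3) with hq
  rw [← cbrt_sq m, ← cbrt_sq n]
  apply cube_root_le (jap_nonneg _) (by positivity)
  have hc : jap (m+n) ≤ p ^ (3:ℕ) + q ^ (3:ℕ) := by
    rw [cbrt_pow3, cbrt_pow3]; exact jap_add_le m n
  have h1 : 1 ≤ p := one_le_cbrt m
  have h2 : 1 ≤ q := one_le_cbrt n
  have hc2 : jap (m+n) ^ (2:ℕ) ≤ (p ^ (3:ℕ) + q ^ (3:ℕ)) ^ (2:ℕ) :=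
    pow_le_pow_left₀ (jap_nonneg _) hc 2
  rw [← hp, ← hq]
  nlinarith [sq_nonneg (p*q*(p-q)), hc2, sq_nonneg (p^2*q), sq_nonneg (p*q^2)]

lemma jap_23_add' (m n : ℤ) (h : jap m ≤ jap n) :
    jap (m + n) ^ ((2:ℝ)/3) ≤ jap n ^ ((2:ℝ)/3) + 2/3 * jap m ^ ((2:ℝ)/3) := by
  set p := jap m ^ ((1:ℝ)/3) with hp
  set q := jap n ^ ((1:ℝ)/3) with hq
  have h1 : 1 ≤ p := one_le_cbrt m
  have h2 : 1 ≤ q := one_le_cbrt n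
  have hpq : p ≤ q := Real.rpow_le_rpow (jap_nonneg m) h (by norm_num)
  rw [← cbrt_sq m, ← cbrt_sq n]
  have key : jap (m+n) ^ (2:ℕ) ≤ (q ^ (2:ℕ) + 2/3 * p ^ (2:ℕ)) ^ (3:ℕ) := by
    have hc : jap (m+n) ≤ p ^ (3:ℕ) + q ^ (3:ℕ) := by
      rw [cbrt_pow3, cbrt_pow3]; exact jap_add_le m n
    have e1 : p^2*q^3*p ≤ p^2*q^3*q := by
      apply mul_le_mul_of_nonneg_left hpq (by positivity)
    have e2 : p^4*p^2 ≤ p^4*q^2 := by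
      apply mul_le_mul_of_nonneg_left (by nlinarith) (by positivity)
    have hc2 : jap (m+n) ^ (2:ℕ) ≤ (p ^ (3:ℕ) + q ^ (3:ℕ)) ^ (2:ℕ) :=
      pow_le_pow_left₀ (jap_nonneg _) hc 2
    nlinarith [hc2, e1, e2, sq_nonneg (p^2*q)]
  calc jap (m+n) ^ ((2:ℝ)/3) ≤ q ^ (2:ℕ) + 2/3 * p ^ (2:ℕ) :=
        cube_root_le (jap_nonneg _) (by positivity) key
    _ = q ^ (2:ℕ) + 2/3 * p ^ (2:ℕ) := rfl

lemma jap_23_diff (k ℓ : ℤ) :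
    |jap k ^ ((2:ℝ)/3) - jap ℓ ^ ((2:ℝ)/3)| * jap ℓ ^ ((1:ℝ)/3) ≤ 2 * jap (k - ℓ) := by
  set a := jap k ^ ((1:ℝ)/3) with ha
  set b := jap ℓ ^ ((1:ℝ)/3) with hb
  have h1 : 1 ≤ a := one_le_cbrt k
  have h2 : 1 ≤ b := one_le_cbrt ℓ
  rw [← cbrt_sq k, ← cbrt_sq ℓ]
  have ha6 : a ^ (6:ℕ) = 1 + (k:ℝ)^2 := by
    have : a ^ (6:ℕ) = (a ^ (3:ℕ)) ^ (2:ℕ) := by ring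
    rw [this, cbrt_pow3, jap_sq]
  have hb6 : b ^ (6:ℕ) = 1 + (ℓ:ℝ)^2 := by
    have : b ^ (6:ℕ) = (b ^ (3:ℕ)) ^ (2:ℕ) := by ring
    rw [this, cbrt_pow3, jap_sq]
  have hid : |a^(2:ℕ) - b^(2:ℕ)| * (a^4 + a^2*b^2 + b^4) = |(k:ℝ)^2 - (ℓ:ℝ)^2| := by
    rw [← abs_of_nonneg (show (0:ℝ) ≤ a^4 + a^2*b^2 + b^4 by positivity), ← abs_mul]
    congr 1
    nlinarith [ha6, hb6]
  have habs : |(k:ℝ)^2 - (ℓ:ℝ)^2| ≤ jap (k-ℓ) * (a^(3:ℕ) + b^(3:ℕ)) := by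
    have hkl : (k:ℝ)^2 - (ℓ:ℝ)^2 = ((k-ℓ:ℤ):ℝ) * ((k+ℓ:ℤ):ℝ) := by push_cast; ring
    rw [hkl, abs_mul]
    apply mul_le_mul (abs_le_jap _) ?_ (abs_nonneg _) (jap_nonneg _)
    calc |((k+ℓ:ℤ):ℝ)| ≤ jap (k+ℓ) := abs_le_jap _
      _ ≤ jap k + jap ℓ := jap_add_le k ℓ
      _ = a^(3:ℕ) + b^(3:ℕ) := by rw [cbrt_pow3, cbrt_pow3]
  have e3 : (a^3+b^3)*b ≤ 2*(a^4+a^2*b^2+b^4) := by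
    nlinarith [sq_nonneg (a*(a-b)), sq_nonneg b, sq_nonneg (b^2), sq_nonneg (a*b)]
  have hfinal : |a^(2:ℕ) - b^(2:ℕ)| * b * (a^4 + a^2*b^2 + b^4)
      ≤ (2 * jap (k-ℓ)) * (a^4 + a^2*b^2 + b^4) := by
    calc |a^(2:ℕ)-b^(2:ℕ)| * b * (a^4+a^2*b^2+b^4)
        = |a^(2:ℕ)-b^(2:ℕ)| * (a^4+a^2*b^2+b^4) * b := by ring
      _ = |(k:ℝ)^2 - (ℓ:ℝ)^2| * b := by rw [hid]
      _ ≤ (jap (k-ℓ) * (a^(3:ℕ)+b^(3:ℕ))) * b :=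
          mul_le_mul_of_nonneg_right habs (le_trans zero_le_one h2)
      _ = jap (k-ℓ) * ((a^3+b^3)*b) := by ring
      _ ≤ jap (k-ℓ) * (2*(a^4+a^2*b^2+b^4)) := mul_le_mul_of_nonneg_left e3 (jap_nonneg _)
      _ = (2 * jap (k-ℓ)) * (a^4+a^2*b^2+b^4) := by ring
  exact le_of_mul_le_mul_right hfinal (by positivity)

-- from t6.lean
lemma jap_neg (k : ℤ) : jap (-k) = jap k := by simp [jap]

lemma jap_ge_nat (n : ℕ) : ((n:ℝ) + 1) / 2 ≤ jap (n : ℤ) := by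
  have h1 := jap_one_le (n : ℤ)
  have h2 : (n:ℝ) ≤ jap (n:ℤ) := by
    have := abs_le_jap (n:ℤ)
    rw [Int.cast_natCast, abs_of_nonneg (Nat.cast_nonneg n)] at this
    exact this
  linarith

lemma summable_jap {p : ℝ} (hp : 1 < p) : Summable (fun m : ℤ => jap m ^ (-p)) := by
  have hnat : Summable (fun n : ℕ => ((n:ℝ) + 1) ^ (-p)) := by
    have h0 : Summable (fun n : ℕ => (n:ℝ) ^ (-p)) :=
      Real.summable_nat_rpow.2 (by linarith)
    have := h0.comp_injective Nat.succ_injective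
    refine this.congr fun n => ?_
    simp only [Function.comp_apply]
    push_cast
    norm_num
  have hbound : ∀ n : ℕ, jap (n : ℤ) ^ (-p) ≤ 2 ^ p * ((n:ℝ) + 1) ^ (-p) := by
    intro n
    have h1 : jap (n:ℤ) ^ (-p) ≤ (((n:ℝ)+1)/2) ^ (-p) := by
      apply Real.rpow_le_rpow_of_nonpos (by positivity) (jap_ge_nat n) (by linarith)
    refine h1.trans_eq ?_
    rw [Real.div_rpow (by positivity) (by norm_num), Real.rpow_neg (by norm_num : (0:ℝ) ≤ 2)]
    field_simp
  have hpos : Summable (fun n : ℕ => jap (n : ℤ) ^ (-p)) := by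
    apply Summable.of_nonneg_of_le (fun n => Real.rpow_nonneg (jap_nonneg _) _) hbound
      (hnat.mul_left _)
  apply Summable.of_nat_of_neg hpos
  refine hpos.congr fun n => ?_
  rw [jap_neg]

-- from t3.lean
lemma abs_exp_sub_exp_le (a b : ℝ) :
    |Real.exp a - Real.exp b| ≤ |a - b| * Real.exp (max a b) := by
  rcases le_total a b with h | h
  · rw [abs_of_nonpos (by simp [Real.exp_le_exp, h]), abs_of_nonpos (by linarith),
      max_eq_right h]
    have h1 := mul_le_mul_of_nonneg_left (Real.add_one_le_exp (a - b)) (Real.exp_pos b).le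
    have h2 : Real.exp b * Real.exp (a - b) = Real.exp a := by
      rw [← Real.exp_add]; ring_nf
    nlinarith [h1, h2]
  · rw [abs_of_nonneg (by simp [Real.exp_le_exp, h]), abs_of_nonneg (by linarith),
      max_eq_left h]
    have h1 := mul_le_mul_of_nonneg_left (Real.add_one_le_exp (b - a)) (Real.exp_pos a).le
    have h2 : Real.exp a * Real.exp (b - a) = Real.exp b := by
      rw [← Real.exp_add]; ring_nf
    nlinarith [h1, h2]

lemma abs_exp_sub_exp_le' (a b : ℝ) :
    |Real.exp a - Real.exp b| ≤ Real.exp (max a b) := by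
  rcases le_total a b with h | h
  · rw [abs_of_nonpos (by simp [Real.exp_le_exp, h]), max_eq_right h]
    have := Real.exp_pos a; linarith
  · rw [abs_of_nonneg (by simp [Real.exp_le_exp, h]), max_eq_left h]
    have := Real.exp_pos b; linarith

lemma key2 (τ : ℝ) (hτ : 0 ≤ τ) (k ℓ : ℤ) :
    |Real.exp (τ * jap k ^ ((2:ℝ)/3)) - Real.exp (τ * jap ℓ ^ ((2:ℝ)/3))| ≤
      Real.exp (τ * jap (k-ℓ) ^ ((2:ℝ)/3)) * Real.exp (τ * jap ℓ ^ ((2:ℝ)/3)) := by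
  refine (abs_exp_sub_exp_le' _ _).trans ?_
  rw [← Real.exp_add]
  rw [Real.exp_le_exp]
  apply max_le
  · have h := jap_23_add (k - ℓ) ℓ
    rw [show k - ℓ + ℓ = k by ring] at h
    calc τ * jap k ^ ((2:ℝ)/3) ≤ τ * (jap (k-ℓ) ^ ((2:ℝ)/3) + jap ℓ ^ ((2:ℝ)/3)) :=
          mul_le_mul_of_nonneg_left h hτ
      _ = τ * jap (k-ℓ) ^ ((2:ℝ)/3) + τ * jap ℓ ^ ((2:ℝ)/3) := by ring
  · have : 0 ≤ τ * jap (k-ℓ) ^ ((2:ℝ)/3) :=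
      mul_nonneg hτ (Real.rpow_nonneg (jap_nonneg _) _)
    linarith

lemma key1 (τ : ℝ) (hτ : 0 ≤ τ) (k ℓ : ℤ) (h : jap (k - ℓ) ≤ jap ℓ) :
    |Real.exp (τ * jap k ^ ((2:ℝ)/3)) - Real.exp (τ * jap ℓ ^ ((2:ℝ)/3))| ≤
      6 * (jap (k-ℓ) ^ ((1:ℝ)/3) / jap ℓ ^ ((1:ℝ)/3)) *
        (Real.exp (τ * jap (k-ℓ) ^ ((2:ℝ)/3)) * Real.exp (τ * jap ℓ ^ ((2:ℝ)/3))) := by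
  set m := k - ℓ with hm
  set s := τ * jap m ^ ((2:ℝ)/3) with hs
  have hs0 : 0 ≤ s := mul_nonneg hτ (Real.rpow_nonneg (jap_nonneg m) _)
  have hb1 : (1:ℝ) ≤ jap ℓ ^ ((1:ℝ)/3) := one_le_cbrt ℓ
  have hb0 : (0:ℝ) < jap ℓ ^ ((1:ℝ)/3) := lt_of_lt_of_le one_pos hb1
  have hJ0 : (0:ℝ) < jap m ^ ((1:ℝ)/3) := lt_of_lt_of_le one_pos (one_le_cbrt m)
  have hAB : |τ * jap k ^ ((2:ℝ)/3) - τ * jap ℓ ^ ((2:ℝ)/3)|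
      ≤ 2 * τ * jap m / jap ℓ ^ ((1:ℝ)/3) := by
    rw [← mul_sub, abs_mul, abs_of_nonneg hτ]
    have hd : |jap k ^ ((2:ℝ)/3) - jap ℓ ^ ((2:ℝ)/3)| ≤ 2 * jap m / jap ℓ ^ ((1:ℝ)/3) :=
      (le_div_iff₀ hb0).2 (jap_23_diff k ℓ)
    calc τ * |jap k ^ ((2:ℝ)/3) - jap ℓ ^ ((2:ℝ)/3)|
        ≤ τ * (2 * jap m / jap ℓ ^ ((1:ℝ)/3)) := mul_le_mul_of_nonneg_left hd hτ
      _ = 2 * τ * jap m / jap ℓ ^ ((1:ℝ)/3) := by ring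
  have hmax : max (τ * jap k ^ ((2:ℝ)/3)) (τ * jap ℓ ^ ((2:ℝ)/3))
      ≤ τ * jap ℓ ^ ((2:ℝ)/3) + 2/3 * s := by
    apply max_le
    · have h' := jap_23_add' m ℓ h
      rw [show m + ℓ = k by omega] at h'
      calc τ * jap k ^ ((2:ℝ)/3)
          ≤ τ * (jap ℓ ^ ((2:ℝ)/3) + 2/3 * jap m ^ ((2:ℝ)/3)) :=
            mul_le_mul_of_nonneg_left h' hτ
        _ = τ * jap ℓ ^ ((2:ℝ)/3) + 2/3 * s := by rw [hs]; ring
    · linarith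
  have hτm : τ * jap m = s * jap m ^ ((1:ℝ)/3) := by
    have hjm : jap m = jap m ^ ((2:ℝ)/3) * jap m ^ ((1:ℝ)/3) := by
      rw [← Real.rpow_add (jap_pos m)]; norm_num
    rw [hs]; nth_rewrite 1 [hjm]; ring
  have hse : s * Real.exp (2/3 * s) ≤ 3 * Real.exp s := by
    have h1 : s / 3 + 1 ≤ Real.exp (s/3) := by
      have := Real.add_one_le_exp (s/3); linarith
    have h2 : Real.exp (2/3*s) * Real.exp (s/3) = Real.exp s := by
      rw [← Real.exp_add]; ring_nf
    nlinarith [Real.exp_pos (2/3*s), Real.exp_pos (s/3)]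
  calc |Real.exp (τ * jap k ^ ((2:ℝ)/3)) - Real.exp (τ * jap ℓ ^ ((2:ℝ)/3))|
      ≤ |τ * jap k ^ ((2:ℝ)/3) - τ * jap ℓ ^ ((2:ℝ)/3)| *
        Real.exp (max (τ * jap k ^ ((2:ℝ)/3)) (τ * jap ℓ ^ ((2:ℝ)/3))) :=
        abs_exp_sub_exp_le _ _
    _ ≤ (2 * τ * jap m / jap ℓ ^ ((1:ℝ)/3)) *
        Real.exp (τ * jap ℓ ^ ((2:ℝ)/3) + 2/3 * s) := by
        apply mul_le_mul hAB (Real.exp_le_exp.2 hmax) (Real.exp_pos _).le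
        exact div_nonneg (mul_nonneg (mul_nonneg (by norm_num) hτ) (jap_nonneg m)) hb0.le
    _ = 2 * (s * Real.exp (2/3 * s)) *
        (jap m ^ ((1:ℝ)/3) * Real.exp (τ * jap ℓ ^ ((2:ℝ)/3))) / jap ℓ ^ ((1:ℝ)/3) := by
        rw [Real.exp_add]
        rw [show 2 * τ * jap m = 2 * (s * jap m ^ ((1:ℝ)/3)) by rw [← hτm]; ring]
        ring
    _ ≤ 2 * (3 * Real.exp s) *
        (jap m ^ ((1:ℝ)/3) * Real.exp (τ * jap ℓ ^ ((2:ℝ)/3))) / jap ℓ ^ ((1:ℝ)/3) := by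
        apply div_le_div_of_nonneg_right ?_ hb0.le
        apply mul_le_mul_of_nonneg_right (by linarith)
        exact mul_nonneg hJ0.le (Real.exp_pos _).le
    _ = 6 * (jap m ^ ((1:ℝ)/3) / jap ℓ ^ ((1:ℝ)/3)) *
        (Real.exp s * Real.exp (τ * jap ℓ ^ ((2:ℝ)/3))) := by ring

-- from t4.lean
lemma jap_rpow_nonneg (k : ℤ) (x : ℝ) : 0 ≤ jap k ^ x := Real.rpow_nonneg (jap_nonneg k) x
lemma jap_rpow_pos (k : ℤ) (x : ℝ) : 0 < jap k ^ x := Real.rpow_pos_of_pos (jap_pos k) x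

lemma prod5_le {a1 a2 a3 a4 a5 b1 b2 b3 b4 b5 : ℝ}
    (h1 : a1 ≤ b1) (h2 : a2 ≤ b2) (h3 : a3 ≤ b3) (h4 : a4 ≤ b4) (h5 : a5 ≤ b5)
    (n2 : 0 ≤ a2) (n3 : 0 ≤ a3) (n4 : 0 ≤ a4) (n5 : 0 ≤ a5)
    (p1 : 0 ≤ b1) (p2 : 0 ≤ b2) (p3 : 0 ≤ b3) (p4 : 0 ≤ b4) :
    a1 * (a2 * a3 * a4 * a5) ≤ b1 * (b2 * b3 * b4 * b5) := by
  have i23 : a2 * a3 ≤ b2 * b3 := mul_le_mul h2 h3 n3 p2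
  have i234 : a2 * a3 * a4 ≤ b2 * b3 * b4 := mul_le_mul i23 h4 n4 (mul_nonneg p2 p3)
  have i2345 : a2 * a3 * a4 * a5 ≤ b2 * b3 * b4 * b5 :=
    mul_le_mul i234 h5 n5 (mul_nonneg (mul_nonneg p2 p3) p4)
  exact mul_le_mul h1 i2345 (by positivity) p1

lemma japk_rpow_le_case1 {r : ℝ} (hr : 0 ≤ r) {k ℓ : ℤ} (h : jap (k - ℓ) ≤ jap ℓ) :
    jap k ^ r ≤ 2 ^ r * jap ℓ ^ r := by
  have hk : jap k ≤ 2 * jap ℓ := by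
    have := jap_add_le (k - ℓ) ℓ
    rw [show k - ℓ + ℓ = k by ring] at this
    linarith
  calc jap k ^ r ≤ (2 * jap ℓ) ^ r := Real.rpow_le_rpow (jap_nonneg k) hk hr
    _ = 2 ^ r * jap ℓ ^ r := Real.mul_rpow (by norm_num) (jap_nonneg ℓ)

lemma japk_rpow_le_case2 {r : ℝ} (hr : 0 ≤ r) {k ℓ : ℤ} (h : jap ℓ ≤ jap (k - ℓ)) :
    jap k ^ r ≤ 2 ^ r * jap (k - ℓ) ^ r := by
  have hk : jap k ≤ 2 * jap (k - ℓ) := by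
    have := jap_add_le (k - ℓ) ℓ
    rw [show k - ℓ + ℓ = k by ring] at this
    linarith
  calc jap k ^ r ≤ (2 * jap (k-ℓ)) ^ r := Real.rpow_le_rpow (jap_nonneg k) hk hr
    _ = 2 ^ r * jap (k-ℓ) ^ r := Real.mul_rpow (by norm_num) (jap_nonneg _)

lemma kernel (r s₁ s δ τ : ℝ) (hr : 0 ≤ r) (hδ0 : 0 ≤ δ) (hδ1 : δ ≤ 1) (hτ : 0 ≤ τ)
    (f g : ℤ → ℂ) (k ℓ : ℤ) :
    jap k ^ r * (|Real.exp (τ * jap k ^ ((2:ℝ)/3)) - Real.exp (τ * jap ℓ ^ ((2:ℝ)/3))| *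
      ‖f (k - ℓ)‖ * |(ℓ:ℝ)| * ‖g ℓ‖) ≤
    (6 * 2 ^ r * jap (k-ℓ) ^ ((1:ℝ)/3 - s₁)) *
      (jap (k-ℓ) ^ s₁ * Real.exp (τ * jap (k-ℓ) ^ ((2:ℝ)/3)) * ‖f (k-ℓ)‖) *
      (jap ℓ ^ (r + 2/3) * Real.exp (τ * jap ℓ ^ ((2:ℝ)/3)) * ‖g ℓ‖) +
    (2 ^ r * jap ℓ ^ (-s)) *
      (jap (k-ℓ) ^ (r + 1 - δ) * Real.exp (τ * jap (k-ℓ) ^ ((2:ℝ)/3)) * ‖f (k-ℓ)‖) *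
      (jap ℓ ^ (s + δ) * Real.exp (τ * jap ℓ ^ ((2:ℝ)/3)) * ‖g ℓ‖) := by
  set m := k - ℓ with hm
  set A := ‖f m‖ with hA
  set B := ‖g ℓ‖ with hB
  set Em := Real.exp (τ * jap m ^ ((2:ℝ)/3)) with hEm
  set El := Real.exp (τ * jap ℓ ^ ((2:ℝ)/3)) with hEl
  have hA0 : 0 ≤ A := norm_nonneg _
  have hB0 : 0 ≤ B := norm_nonneg _
  have hEm0 : 0 < Em := Real.exp_pos _
  have hEl0 : 0 < El := Real.exp_pos _
  have h2r : (0:ℝ) < 2 ^ r := Real.rpow_pos_of_pos (by norm_num) r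
  rcases le_total (jap m) (jap ℓ) with hcase | hcase
  · -- low-high: first term
    apply le_add_of_le_of_nonneg
    · calc jap k ^ r * (|Real.exp (τ * jap k ^ ((2:ℝ)/3)) - El| * A * |(ℓ:ℝ)| * B)
          ≤ (2 ^ r * jap ℓ ^ r) *
            ((6 * (jap m ^ ((1:ℝ)/3) * jap ℓ ^ (-((1:ℝ)/3))) * (Em * El)) * A * jap ℓ * B) := by
            have hkey : |Real.exp (τ * jap k ^ ((2:ℝ)/3)) - El| ≤
                6 * (jap m ^ ((1:ℝ)/3) * jap ℓ ^ (-((1:ℝ)/3))) * (Em * El) := by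
              rw [Real.rpow_neg (jap_nonneg ℓ), ← div_eq_mul_inv]
              exact key1 τ hτ k ℓ hcase
            apply prod5_le (japk_rpow_le_case1 hr hcase) hkey le_rfl
              (abs_le_jap ℓ) le_rfl (abs_nonneg _) hA0 (abs_nonneg _) hB0
              (mul_nonneg h2r.le (jap_rpow_nonneg ℓ r)) ?_ hA0 (jap_nonneg ℓ)
            have h1 := jap_rpow_nonneg m ((1:ℝ)/3); have h2 := jap_rpow_nonneg ℓ (-((1:ℝ)/3))
            positivity
      _ = (6 * 2 ^ r * jap m ^ ((1:ℝ)/3 - s₁)) * (jap m ^ s₁ * Em * A) *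
            (jap ℓ ^ (r + 2/3) * El * B) := by
            have em : jap m ^ ((1:ℝ)/3 - s₁) * jap m ^ s₁ = jap m ^ ((1:ℝ)/3) := by
              rw [← Real.rpow_add (jap_pos m)]; congr 1; ring
            have elneg : jap ℓ ^ r * jap ℓ * jap ℓ ^ (-((1:ℝ)/3)) = jap ℓ ^ (r + 2/3) := by
              have h' : jap ℓ ^ r * jap ℓ ^ (1:ℝ) * jap ℓ ^ (-((1:ℝ)/3)) = jap ℓ ^ (r+2/3) := by
                rw [← Real.rpow_add (jap_pos ℓ), ← Real.rpow_add (jap_pos ℓ)]; congr 1; ring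
              rwa [Real.rpow_one] at h'
            linear_combination
              (-(6 * 2^r * Em * El * A * B) *
                (jap ℓ ^ r * jap ℓ * jap ℓ ^ (-((1:ℝ)/3)))) * em +
              ((6 * 2^r * Em * El * A * B) *
                (jap m ^ ((1:ℝ)/3 - s₁) * jap m ^ s₁)) * elneg
    · have n1 := jap_rpow_nonneg ℓ (-s); have n2 := jap_rpow_nonneg m (r+1-δ)
      have n3 := jap_rpow_nonneg ℓ (s+δ)
      positivity
  · -- high-low: second term
    apply le_add_of_nonneg_of_le
    · have n1 := jap_rpow_nonneg m ((1:ℝ)/3 - s₁); have n2 := jap_rpow_nonneg m s₁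
      have n3 := jap_rpow_nonneg ℓ (r+2/3)
      positivity
    · calc jap k ^ r * (|Real.exp (τ * jap k ^ ((2:ℝ)/3)) - El| * A * |(ℓ:ℝ)| * B)
          ≤ (2 ^ r * jap m ^ r) *
            ((Em * El) * A * (jap ℓ ^ δ * jap m ^ (1-δ)) * B) := by
            apply prod5_le (japk_rpow_le_case2 hr hcase) (key2 τ hτ k ℓ) le_rfl ?_ le_rfl
              (abs_nonneg _) hA0 (abs_nonneg _) hB0
              (mul_nonneg h2r.le (jap_rpow_nonneg m r)) (by positivity) hA0
              (mul_nonneg (jap_rpow_nonneg _ _) (jap_rpow_nonneg _ _))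
            calc |(ℓ:ℝ)| ≤ jap ℓ := abs_le_jap ℓ
              _ = jap ℓ ^ δ * jap ℓ ^ (1-δ) := by
                  rw [← Real.rpow_add (jap_pos ℓ)]; norm_num
              _ ≤ jap ℓ ^ δ * jap m ^ (1-δ) := by
                  apply mul_le_mul_of_nonneg_left
                    (Real.rpow_le_rpow (jap_nonneg ℓ) hcase (by linarith))
                    (jap_rpow_nonneg ℓ δ)
      _ = (2 ^ r * jap ℓ ^ (-s)) * (jap m ^ (r + 1 - δ) * Em * A) *
            (jap ℓ ^ (s + δ) * El * B) := by
            have e1 : jap m ^ r * jap m ^ (1-δ) = jap m ^ (r + 1 - δ) := by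
              rw [← Real.rpow_add (jap_pos m)]; congr 1; ring
            have e2 : jap ℓ ^ (-s) * jap ℓ ^ (s+δ) = jap ℓ ^ δ := by
              rw [← Real.rpow_add (jap_pos ℓ)]; congr 1; ring
            rw [← e1, ← e2]; ring

-- from t5.lean
lemma tsum_cs (a b : ℤ → ENNReal) :
    (∑' i, a i * b i) ^ 2 ≤ (∑' i, (a i) ^ 2) * (∑' i, (b i) ^ 2) := by
  have hpq : Real.HolderConjugate 2 2 := Real.HolderConjugate.two_two
  have h := ENNReal.lintegral_mul_le_Lp_mul_Lq (Measure.count : Measure ℤ) hpq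
    (Measurable.of_discrete (f := a)).aemeasurable (Measurable.of_discrete (f := b)).aemeasurable
  rw [lintegral_count, lintegral_count, lintegral_count] at h
  have h2 : ∀ c : ℤ → ENNReal, (fun i => c i ^ (2:ℝ)) = fun i => (c i) ^ (2:ℕ) := by
    intro c; funext i
    rw [show (2:ℝ) = ((2:ℕ):ℝ) by norm_num, ENNReal.rpow_natCast]
  rw [h2 a, h2 b] at h
  calc (∑' i, a i * b i) ^ 2
      ≤ ((∑' i, a i ^ (2:ℕ)) ^ ((1:ℝ)/2) * (∑' i, b i ^ (2:ℕ)) ^ ((1:ℝ)/2)) ^ 2 := by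
        rw [pow_two, pow_two]
        exact mul_le_mul' h h
    _ = (∑' i, a i ^ 2) * (∑' i, b i ^ 2) := by
        rw [mul_pow, ← ENNReal.rpow_natCast (_ ^ ((1:ℝ)/2)) 2, ← ENNReal.rpow_mul,
          ← ENNReal.rpow_natCast (_ ^ ((1:ℝ)/2)) 2, ← ENNReal.rpow_mul]
        norm_num

lemma sqrt_mul_self_ennreal (x : ENNReal) : x ^ ((1:ℝ)/2) * x ^ ((1:ℝ)/2) = x := by
  rw [← ENNReal.rpow_add_of_nonneg _ _ (by norm_num) (by norm_num)]
  norm_num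

lemma sqrt_sq_ennreal (x : ENNReal) : (x ^ ((1:ℝ)/2)) ^ (2:ℕ) = x := by
  rw [← ENNReal.rpow_natCast (x ^ ((1:ℝ)/2)) 2, ← ENNReal.rpow_mul]
  norm_num

lemma conv_l2 (h G : ℤ → ENNReal) :
    ∑' k : ℤ, (∑' ℓ : ℤ, h (k - ℓ) * G ℓ) ^ 2 ≤
      (∑' j : ℤ, h j) ^ 2 * (∑' ℓ : ℤ, G ℓ ^ 2) := by
  have hpt : ∀ k : ℤ, (∑' ℓ : ℤ, h (k - ℓ) * G ℓ) ^ 2 ≤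
      (∑' j : ℤ, h j) * (∑' ℓ : ℤ, h (k - ℓ) * G ℓ ^ 2) := by
    intro k
    calc (∑' ℓ : ℤ, h (k-ℓ) * G ℓ)^2
        = (∑' ℓ : ℤ, (h (k-ℓ) ^ ((1:ℝ)/2)) * (h (k-ℓ) ^ ((1:ℝ)/2) * G ℓ))^2 := by
          congr 1; apply tsum_congr; intro ℓ; rw [← mul_assoc, sqrt_mul_self_ennreal]
      _ ≤ (∑' ℓ : ℤ, (h (k-ℓ) ^ ((1:ℝ)/2))^2) * (∑' ℓ : ℤ, (h (k-ℓ)^((1:ℝ)/2) * G ℓ)^2) :=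
          tsum_cs _ _
      _ = (∑' ℓ : ℤ, h (k-ℓ)) * (∑' ℓ : ℤ, h (k-ℓ) * G ℓ^2) := by
          congr 1
          · apply tsum_congr; intro ℓ; exact sqrt_sq_ennreal _
          · apply tsum_congr; intro ℓ; rw [mul_pow, sqrt_sq_ennreal]
      _ = (∑' j : ℤ, h j) * (∑' ℓ : ℤ, h (k-ℓ) * G ℓ^2) := by
          congr 1; exact (Equiv.subLeft k).tsum_eq h
  calc ∑' k : ℤ, (∑' ℓ : ℤ, h (k-ℓ) * G ℓ)^2
      ≤ ∑' k : ℤ, (∑' j : ℤ, h j) * (∑' ℓ : ℤ, h (k-ℓ) * G ℓ^2) :=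
        ENNReal.tsum_le_tsum hpt
    _ = (∑' j : ℤ, h j) * ∑' k : ℤ, ∑' ℓ : ℤ, h (k-ℓ) * G ℓ^2 := ENNReal.tsum_mul_left
    _ = (∑' j : ℤ, h j) * ∑' ℓ : ℤ, ∑' k : ℤ, h (k-ℓ) * G ℓ^2 := by rw [ENNReal.tsum_comm]
    _ = (∑' j : ℤ, h j) * ∑' ℓ : ℤ, (∑' k : ℤ, h (k-ℓ)) * G ℓ^2 := by
        congr 1; apply tsum_congr; intro ℓ; rw [ENNReal.tsum_mul_right]
    _ = (∑' j : ℤ, h j) * ∑' ℓ : ℤ, (∑' j : ℤ, h j) * G ℓ^2 := by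
        congr 1; apply tsum_congr; intro ℓ; congr 1
        exact (Equiv.subRight ℓ).tsum_eq h
    _ = (∑' j : ℤ, h j) * ((∑' j : ℤ, h j) * ∑' ℓ : ℤ, G ℓ^2) := by
        rw [ENNReal.tsum_mul_left]
    _ = (∑' j : ℤ, h j)^2 * (∑' ℓ : ℤ, G ℓ^2) := by ring

lemma conv_l2' (F w : ℤ → ENNReal) :
    ∑' k : ℤ, (∑' ℓ : ℤ, F (k - ℓ) * w ℓ) ^ 2 ≤
      (∑' j : ℤ, w j) ^ 2 * (∑' ℓ : ℤ, F ℓ ^ 2) := by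
  have hswap : ∀ k : ℤ, (∑' ℓ : ℤ, F (k - ℓ) * w ℓ) = ∑' ℓ : ℤ, w (k - ℓ) * F ℓ := by
    intro k
    rw [← (Equiv.subLeft k).tsum_eq (fun ℓ => w (k - ℓ) * F ℓ)]
    apply tsum_congr; intro j
    simp only [Equiv.subLeft_apply, sub_sub_cancel]
    ring
  simp only [hswap]
  exact conv_l2 w F

-- from t8.lean
lemma my_add_sq_le (x y : ENNReal) : (x + y)^2 ≤ 4*x^2 + 4*y^2 := by
  rcases le_total x y with h|h
  · have h1 : x + y ≤ 2*y := by rw [two_mul]; exact add_le_add_left h y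
    calc (x+y)^2 ≤ (2*y)^2 := by rw [pow_two, pow_two]; exact mul_le_mul' h1 h1
      _ = 4*y^2 := by ring
      _ ≤ 4*x^2 + 4*y^2 := le_add_self
  · have h1 : x + y ≤ 2*x := by rw [two_mul]; exact add_le_add_right h x
    calc (x+y)^2 ≤ (2*x)^2 := by rw [pow_two, pow_two]; exact mul_le_mul' h1 h1
      _ = 4*x^2 := by ring
      _ ≤ 4*x^2 + 4*y^2 := le_add_right le_rfl

lemma stepL (u : ℤ → ENNReal) (CC1 CC2 : ENNReal) (c₁ F₁ G₁ c₂ F₂ G₂ : ℤ → ENNReal)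
    (h : ∀ k : ℤ, u k ≤ CC1 * (∑' ℓ : ℤ, (c₁ (k-ℓ) * F₁ (k-ℓ)) * G₁ ℓ) +
      CC2 * (∑' ℓ : ℤ, F₂ (k-ℓ) * (c₂ ℓ * G₂ ℓ))) :
    ∑' k : ℤ, (u k)^2 ≤
      4 * CC1^2 * ((∑' m : ℤ, c₁ m ^ 2) * (∑' m : ℤ, F₁ m ^ 2) * (∑' n : ℤ, G₁ n ^ 2)) +
      4 * CC2^2 * ((∑' n : ℤ, c₂ n ^ 2) * (∑' n : ℤ, G₂ n ^ 2) * (∑' m : ℤ, F₂ m ^ 2)) := by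
  have hA : ∑' k : ℤ, (∑' ℓ : ℤ, (c₁ (k-ℓ) * F₁ (k-ℓ)) * G₁ ℓ) ^ 2 ≤
      (∑' m : ℤ, c₁ m ^ 2) * (∑' m : ℤ, F₁ m ^ 2) * (∑' n : ℤ, G₁ n ^ 2) := by
    calc ∑' k : ℤ, (∑' ℓ : ℤ, (c₁ (k-ℓ) * F₁ (k-ℓ)) * G₁ ℓ) ^ 2
        ≤ (∑' j : ℤ, c₁ j * F₁ j) ^ 2 * (∑' n : ℤ, G₁ n ^ 2) :=
          conv_l2 (fun m => c₁ m * F₁ m) G₁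
      _ ≤ ((∑' m : ℤ, c₁ m ^ 2) * (∑' m : ℤ, F₁ m ^ 2)) * (∑' n : ℤ, G₁ n ^ 2) :=
          mul_le_mul' (tsum_cs c₁ F₁) le_rfl
      _ = _ := by ring
  have hB : ∑' k : ℤ, (∑' ℓ : ℤ, F₂ (k-ℓ) * (c₂ ℓ * G₂ ℓ)) ^ 2 ≤
      (∑' n : ℤ, c₂ n ^ 2) * (∑' n : ℤ, G₂ n ^ 2) * (∑' m : ℤ, F₂ m ^ 2) := by
    calc ∑' k : ℤ, (∑' ℓ : ℤ, F₂ (k-ℓ) * (c₂ ℓ * G₂ ℓ)) ^ 2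
        ≤ (∑' j : ℤ, c₂ j * G₂ j) ^ 2 * (∑' m : ℤ, F₂ m ^ 2) :=
          conv_l2' F₂ (fun n => c₂ n * G₂ n)
      _ ≤ ((∑' n : ℤ, c₂ n ^ 2) * (∑' n : ℤ, G₂ n ^ 2)) * (∑' m : ℤ, F₂ m ^ 2) :=
          mul_le_mul' (tsum_cs c₂ G₂) le_rfl
      _ = _ := by ring
  calc ∑' k : ℤ, (u k)^2
      ≤ ∑' k : ℤ, (CC1 * (∑' ℓ : ℤ, (c₁ (k-ℓ) * F₁ (k-ℓ)) * G₁ ℓ) +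
          CC2 * (∑' ℓ : ℤ, F₂ (k-ℓ) * (c₂ ℓ * G₂ ℓ)))^2 :=
        ENNReal.tsum_le_tsum fun k => by
          rw [pow_two, pow_two]; exact mul_le_mul' (h k) (h k)
    _ ≤ ∑' k : ℤ, (4 * (CC1 * (∑' ℓ : ℤ, (c₁ (k-ℓ) * F₁ (k-ℓ)) * G₁ ℓ))^2 +
          4 * (CC2 * (∑' ℓ : ℤ, F₂ (k-ℓ) * (c₂ ℓ * G₂ ℓ)))^2) :=
        ENNReal.tsum_le_tsum fun k => my_add_sq_le _ _
    _ = 4 * CC1^2 * (∑' k : ℤ, (∑' ℓ : ℤ, (c₁ (k-ℓ) * F₁ (k-ℓ)) * G₁ ℓ)^2) +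
        4 * CC2^2 * (∑' k : ℤ, (∑' ℓ : ℤ, F₂ (k-ℓ) * (c₂ ℓ * G₂ ℓ))^2) := by
        rw [ENNReal.tsum_add, ← ENNReal.tsum_mul_left, ← ENNReal.tsum_mul_left]
        congr 1 <;> exact tsum_congr fun k => by ring
    _ ≤ _ := add_le_add (mul_le_mul' le_rfl hA) (mul_le_mul' le_rfl hB)

-- from t7.lean
lemma weight_nonneg (τ e : ℝ) (h : ℤ → ℂ) (m : ℤ) :
    0 ≤ jap m ^ e * Real.exp (τ * jap m ^ ((2:ℝ)/3)) * ‖h m‖ :=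
  mul_nonneg (mul_nonneg (jap_rpow_nonneg m e) (Real.exp_pos _).le) (norm_nonneg _)

lemma step1 (r s₁ s δ τ : ℝ) (hr : 0 ≤ r) (hδ0 : 0 ≤ δ) (hδ1 : δ ≤ 1) (hτ : 0 ≤ τ)
    (f g : ℤ → ℂ) (k : ℤ) :
    ENNReal.ofReal (jap k ^ r * ‖gevreyCommCoef τ f g k‖) ≤
      ENNReal.ofReal (6 * 2 ^ r) * (∑' ℓ : ℤ,
        (ENNReal.ofReal (jap (k-ℓ) ^ ((1:ℝ)/3 - s₁)) *
          ENNReal.ofReal (jap (k-ℓ) ^ s₁ * Real.exp (τ * jap (k-ℓ) ^ ((2:ℝ)/3)) *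
            ‖f (k-ℓ)‖)) *
        ENNReal.ofReal (jap ℓ ^ (r + 2/3) * Real.exp (τ * jap ℓ ^ ((2:ℝ)/3)) *
          ‖g ℓ‖)) +
      ENNReal.ofReal (2 ^ r) * (∑' ℓ : ℤ,
        ENNReal.ofReal (jap (k-ℓ) ^ (r + 1 - δ) * Real.exp (τ * jap (k-ℓ) ^ ((2:ℝ)/3)) *
          ‖f (k-ℓ)‖) *
        (ENNReal.ofReal (jap ℓ ^ (-s)) *
          ENNReal.ofReal (jap ℓ ^ (s + δ) * Real.exp (τ * jap ℓ ^ ((2:ℝ)/3)) *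
            ‖g ℓ‖))) := by
  have h2r : (0:ℝ) < 2 ^ r := Real.rpow_pos_of_pos two_pos r
  set y : ℤ → ℝ := fun ℓ =>
    jap k ^ r * (|Real.exp (τ * jap k ^ ((2:ℝ)/3)) - Real.exp (τ * jap ℓ ^ ((2:ℝ)/3))| *
      ‖f (k - ℓ)‖ * |(ℓ:ℝ)| * ‖g ℓ‖) with hy
  have hy0 : ∀ ℓ, 0 ≤ y ℓ := fun ℓ => by
    rw [hy]
    exact mul_nonneg (jap_rpow_nonneg k r)
      (mul_nonneg (mul_nonneg (mul_nonneg (abs_nonneg _) (norm_nonneg _))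
        (abs_nonneg _)) (norm_nonneg _))
  have hpt : ∀ ℓ : ℤ, ENNReal.ofReal (y ℓ) ≤
      ENNReal.ofReal (6 * 2 ^ r) *
        ((ENNReal.ofReal (jap (k-ℓ) ^ ((1:ℝ)/3 - s₁)) *
          ENNReal.ofReal (jap (k-ℓ) ^ s₁ * Real.exp (τ * jap (k-ℓ) ^ ((2:ℝ)/3)) *
            ‖f (k-ℓ)‖)) *
        ENNReal.ofReal (jap ℓ ^ (r + 2/3) * Real.exp (τ * jap ℓ ^ ((2:ℝ)/3)) *
          ‖g ℓ‖)) +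
      ENNReal.ofReal (2 ^ r) *
        (ENNReal.ofReal (jap (k-ℓ) ^ (r + 1 - δ) * Real.exp (τ * jap (k-ℓ) ^ ((2:ℝ)/3)) *
          ‖f (k-ℓ)‖) *
        (ENNReal.ofReal (jap ℓ ^ (-s)) *
          ENNReal.ofReal (jap ℓ ^ (s + δ) * Real.exp (τ * jap ℓ ^ ((2:ℝ)/3)) *
            ‖g ℓ‖))) := by
    intro ℓ
    refine (ENNReal.ofReal_le_ofReal (kernel r s₁ s δ τ hr hδ0 hδ1 hτ f g k ℓ)).trans ?_
    have hT1 : 0 ≤ (6 * 2 ^ r * jap (k-ℓ) ^ ((1:ℝ)/3 - s₁)) *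
        (jap (k-ℓ) ^ s₁ * Real.exp (τ * jap (k-ℓ) ^ ((2:ℝ)/3)) * ‖f (k-ℓ)‖) *
        (jap ℓ ^ (r + 2/3) * Real.exp (τ * jap ℓ ^ ((2:ℝ)/3)) * ‖g ℓ‖) := by
      apply mul_nonneg (mul_nonneg _ (weight_nonneg _ _ _ _)) (weight_nonneg _ _ _ _)
      exact mul_nonneg (by positivity) (jap_rpow_nonneg _ _)
    have hT2 : 0 ≤ (2 ^ r * jap ℓ ^ (-s)) *
        (jap (k-ℓ) ^ (r + 1 - δ) * Real.exp (τ * jap (k-ℓ) ^ ((2:ℝ)/3)) *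
          ‖f (k-ℓ)‖) *
        (jap ℓ ^ (s + δ) * Real.exp (τ * jap ℓ ^ ((2:ℝ)/3)) * ‖g ℓ‖) := by
      apply mul_nonneg (mul_nonneg _ (weight_nonneg _ _ _ _)) (weight_nonneg _ _ _ _)
      exact mul_nonneg h2r.le (jap_rpow_nonneg _ _)
    rw [ENNReal.ofReal_add hT1 hT2]
    apply add_le_add (le_of_eq ?_) (le_of_eq ?_)
    · rw [ENNReal.ofReal_mul (mul_nonneg (mul_nonneg (by positivity) (jap_rpow_nonneg _ _))
        (weight_nonneg _ _ _ _)),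
        ENNReal.ofReal_mul (mul_nonneg (by positivity) (jap_rpow_nonneg _ _)),
        ENNReal.ofReal_mul (show (0:ℝ) ≤ 6 * 2 ^ r by positivity)]
      ring
    · rw [ENNReal.ofReal_mul (mul_nonneg (mul_nonneg h2r.le (jap_rpow_nonneg _ _))
        (weight_nonneg _ _ _ _)),
        ENNReal.ofReal_mul (mul_nonneg h2r.le (jap_rpow_nonneg _ _)),
        ENNReal.ofReal_mul h2r.le]
      ring
  have claim1 : ENNReal.ofReal (jap k ^ r * ‖gevreyCommCoef τ f g k‖) ≤
      ∑' ℓ : ℤ, ENNReal.ofReal (y ℓ) := by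
    by_cases hfin : (∑' ℓ : ℤ, ENNReal.ofReal (y ℓ)) = ⊤
    · rw [hfin]; exact le_top
    · have hsy : Summable y := by
        refine (ENNReal.summable_toReal hfin).congr fun ℓ => ?_
        exact ENNReal.toReal_ofReal (hy0 ℓ)
      set z : ℤ → ℂ := fun ℓ =>
        ((Real.exp (τ * jap k ^ ((2:ℝ)/3)) - Real.exp (τ * jap ℓ ^ ((2:ℝ)/3)) : ℝ) : ℂ) *
          f (k - ℓ) * (Complex.I * (ℓ:ℂ)) * g ℓ with hzdef
      have hz_norm : ∀ ℓ, ‖z ℓ‖ =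
          |Real.exp (τ * jap k ^ ((2:ℝ)/3)) - Real.exp (τ * jap ℓ ^ ((2:ℝ)/3))| *
            ‖f (k - ℓ)‖ * |(ℓ:ℝ)| * ‖g ℓ‖ := by
        intro ℓ
        rw [hzdef]
        simp only [norm_mul, Complex.norm_real, Complex.norm_I,
          Complex.norm_intCast, Real.norm_eq_abs, one_mul]
      have hzsum : Summable fun ℓ => ‖z ℓ‖ := by
        have h1 : Summable fun ℓ => (jap k ^ r)⁻¹ * y ℓ := hsy.mul_left _
        refine h1.congr fun ℓ => ?_
        rw [hy, hz_norm ℓ, inv_mul_cancel_left₀ (jap_rpow_pos k r).ne']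
      have hcomm : ‖gevreyCommCoef τ f g k‖ ≤ ∑' ℓ, ‖z ℓ‖ := by
        rw [show gevreyCommCoef τ f g k = ∑' ℓ, z ℓ from rfl]
        exact norm_tsum_le_tsum_norm hzsum
      calc ENNReal.ofReal (jap k ^ r * ‖gevreyCommCoef τ f g k‖)
          ≤ ENNReal.ofReal (jap k ^ r * ∑' ℓ, ‖z ℓ‖) := by
            apply ENNReal.ofReal_le_ofReal
            exact mul_le_mul_of_nonneg_left hcomm (jap_rpow_nonneg k r)
        _ = ENNReal.ofReal (∑' ℓ, y ℓ) := by
            rw [← tsum_mul_left]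
            congr 1
            apply tsum_congr fun ℓ => ?_
            rw [hy, hz_norm ℓ]
        _ = ∑' ℓ, ENNReal.ofReal (y ℓ) := ENNReal.ofReal_tsum_of_nonneg hy0 hsy
  calc ENNReal.ofReal (jap k ^ r * ‖gevreyCommCoef τ f g k‖)
      ≤ ∑' ℓ : ℤ, ENNReal.ofReal (y ℓ) := claim1
    _ ≤ ∑' ℓ : ℤ, (ENNReal.ofReal (6 * 2 ^ r) *
        ((ENNReal.ofReal (jap (k-ℓ) ^ ((1:ℝ)/3 - s₁)) *
          ENNReal.ofReal (jap (k-ℓ) ^ s₁ * Real.exp (τ * jap (k-ℓ) ^ ((2:ℝ)/3)) *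
            ‖f (k-ℓ)‖)) *
        ENNReal.ofReal (jap ℓ ^ (r + 2/3) * Real.exp (τ * jap ℓ ^ ((2:ℝ)/3)) *
          ‖g ℓ‖)) +
        ENNReal.ofReal (2 ^ r) *
        (ENNReal.ofReal (jap (k-ℓ) ^ (r + 1 - δ) * Real.exp (τ * jap (k-ℓ) ^ ((2:ℝ)/3)) *
          ‖f (k-ℓ)‖) *
        (ENNReal.ofReal (jap ℓ ^ (-s)) *
          ENNReal.ofReal (jap ℓ ^ (s + δ) * Real.exp (τ * jap ℓ ^ ((2:ℝ)/3)) *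
            ‖g ℓ‖)))) := ENNReal.tsum_le_tsum hpt
    _ = _ := by rw [ENNReal.tsum_add, ENNReal.tsum_mul_left, ENNReal.tsum_mul_left]

-- from t9.lean
lemma ofReal_prod5 (a b c d e : ℝ) (ha : 0 ≤ a) (hb : 0 ≤ b) (hc : 0 ≤ c) (hd : 0 ≤ d) :
    ENNReal.ofReal (a*b*c*d*e) = ENNReal.ofReal a * ENNReal.ofReal b * ENNReal.ofReal c *
      ENNReal.ofReal d * ENNReal.ofReal e := by
  rw [ENNReal.ofReal_mul (by positivity), ENNReal.ofReal_mul (by positivity),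
    ENNReal.ofReal_mul (by positivity), ENNReal.ofReal_mul ha]

/-- Gevrey commutator estimate: for `r ≥ 0`, `s₁ > 3/2`, `s > 1/2`, `0 ≤ δ ≤ 1`,
`‖(f∂_x g)_Φ − f∂_x g_Φ‖_{H^r} ≤ C|f|_{X^{s₁}}|g|_{X^{r+2/3}}
  + C|f|_{X^{r+1-δ}}|g|_{X^{s+δ}}`. -/
theorem gevrey_commutator_estimate (r s₁ s δ : ℝ)
    (hr : 0 ≤ r) (hs₁ : 3 / 2 < s₁) (hs : 1 / 2 < s) (hδ0 : 0 ≤ δ) (hδ1 : δ ≤ 1) :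
    ∃ C : ℝ, 0 < C ∧ ∀ (τ : ℝ), 0 ≤ τ → ∀ f g : ℤ → ℂ,
      Summable (fun k : ℤ =>
        (jap k ^ s₁ * Real.exp (τ * jap k ^ ((2 : ℝ) / 3)) * ‖f k‖) ^ 2) →
      Summable (fun k : ℤ =>
        (jap k ^ (r + 1 - δ) * Real.exp (τ * jap k ^ ((2 : ℝ) / 3)) * ‖f k‖) ^ 2) →
      Summable (fun k : ℤ =>
        (jap k ^ (r + 2 / 3) * Real.exp (τ * jap k ^ ((2 : ℝ) / 3)) * ‖g k‖) ^ 2) →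
      Summable (fun k : ℤ =>
        (jap k ^ (s + δ) * Real.exp (τ * jap k ^ ((2 : ℝ) / 3)) * ‖g k‖) ^ 2) →
      (∀ k : ℤ, Summable (fun ℓ : ℤ =>
        ((Real.exp (τ * jap k ^ ((2 : ℝ) / 3)) -
            Real.exp (τ * jap ℓ ^ ((2 : ℝ) / 3)) : ℝ) : ℂ) *
          f (k - ℓ) * (Complex.I * (ℓ : ℂ)) * g ℓ)) →
      Real.sqrt (∑' k : ℤ, (jap k ^ r * ‖gevreyCommCoef τ f g k‖) ^ 2) ≤
        C * Xnorm τ s₁ f * Xnorm τ (r + 2 / 3) g +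
          C * Xnorm τ (r + 1 - δ) f * Xnorm τ (s + δ) g := by
  have h2r : (0:ℝ) < 2 ^ r := Real.rpow_pos_of_pos two_pos r
  have hsumc₁ : Summable (fun m : ℤ => (jap m ^ ((1:ℝ)/3 - s₁)) ^ 2) := by
    refine (summable_jap (p := 2*s₁ - 2/3) (by linarith)).congr fun m => ?_
    rw [← Real.rpow_natCast (jap m ^ ((1:ℝ)/3 - s₁)) 2, ← Real.rpow_mul (jap_nonneg m)]
    congr 1; push_cast; ring
  have hsumc₂ : Summable (fun n : ℤ => (jap n ^ (-s)) ^ 2) := by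
    refine (summable_jap (p := 2*s) (by linarith)).congr fun n => ?_
    rw [← Real.rpow_natCast (jap n ^ (-s)) 2, ← Real.rpow_mul (jap_nonneg n)]
    congr 1; push_cast; ring
  set γ₁ := ∑' m : ℤ, (jap m ^ ((1:ℝ)/3 - s₁)) ^ 2 with hγ₁def
  set γ₂ := ∑' n : ℤ, (jap n ^ (-s)) ^ 2 with hγ₂def
  have hγ₁0 : 0 ≤ γ₁ := tsum_nonneg fun m => sq_nonneg _
  have hγ₂0 : 0 ≤ γ₂ := tsum_nonneg fun n => sq_nonneg _
  have hsγ₁ : 0 ≤ Real.sqrt γ₁ := Real.sqrt_nonneg _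
  have hsγ₂ : 0 ≤ Real.sqrt γ₂ := Real.sqrt_nonneg _
  refine ⟨2 * (6 * 2 ^ r) * Real.sqrt γ₁ + 2 * 2 ^ r * Real.sqrt γ₂ + 1, by positivity, ?_⟩
  intro τ hτ f g hf₁ hf₂ hg₁ hg₂ hz
  -- ENNReal main bound
  have hstepL := stepL
    (fun k => ENNReal.ofReal (jap k ^ r * ‖gevreyCommCoef τ f g k‖))
    (ENNReal.ofReal (6 * 2 ^ r)) (ENNReal.ofReal (2 ^ r))
    (fun m => ENNReal.ofReal (jap m ^ ((1:ℝ)/3 - s₁)))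
    (fun m => ENNReal.ofReal (jap m ^ s₁ * Real.exp (τ * jap m ^ ((2:ℝ)/3)) *
      ‖f m‖))
    (fun n => ENNReal.ofReal (jap n ^ (r + 2/3) * Real.exp (τ * jap n ^ ((2:ℝ)/3)) *
      ‖g n‖))
    (fun n => ENNReal.ofReal (jap n ^ (-s)))
    (fun m => ENNReal.ofReal (jap m ^ (r + 1 - δ) * Real.exp (τ * jap m ^ ((2:ℝ)/3)) *
      ‖f m‖))
    (fun n => ENNReal.ofReal (jap n ^ (s + δ) * Real.exp (τ * jap n ^ ((2:ℝ)/3)) *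
      ‖g n‖))
    (fun k => step1 r s₁ s δ τ hr hδ0 hδ1 hτ f g k)
  -- convert the six ENNReal sums
  have conv : ∀ (w : ℤ → ℝ), (∀ m, 0 ≤ w m) → Summable (fun m => (w m)^2) →
      (∑' m : ℤ, (ENNReal.ofReal (w m)) ^ 2) = ENNReal.ofReal (∑' m : ℤ, (w m)^2) := by
    intro w hw hsw
    rw [ENNReal.ofReal_tsum_of_nonneg (fun m => sq_nonneg _) hsw]
    exact tsum_congr fun m => (ENNReal.ofReal_pow (hw m) 2).symm
  rw [conv _ (fun m => jap_rpow_nonneg m _) hsumc₁,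
      conv _ (fun m => weight_nonneg τ s₁ f m) hf₁,
      conv _ (fun n => weight_nonneg τ (r+2/3) g n) hg₁,
      conv _ (fun n => jap_rpow_nonneg n _) hsumc₂,
      conv _ (fun n => weight_nonneg τ (s+δ) g n) hg₂,
      conv _ (fun m => weight_nonneg τ (r+1-δ) f m) hf₂] at hstepL
  rw [← hγ₁def, ← hγ₂def] at hstepL
  -- real data
  set T1f := ∑' k : ℤ, (jap k ^ s₁ * Real.exp (τ * jap k ^ ((2:ℝ)/3)) * ‖f k‖)^2
    with hT1f
  set T2f := ∑' k : ℤ, (jap k ^ (r+1-δ) * Real.exp (τ * jap k ^ ((2:ℝ)/3)) *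
    ‖f k‖)^2 with hT2f
  set TG1 := ∑' k : ℤ, (jap k ^ (r+2/3) * Real.exp (τ * jap k ^ ((2:ℝ)/3)) *
    ‖g k‖)^2 with hTG1
  set TG2 := ∑' k : ℤ, (jap k ^ (s+δ) * Real.exp (τ * jap k ^ ((2:ℝ)/3)) *
    ‖g k‖)^2 with hTG2
  have hT1f0 : 0 ≤ T1f := tsum_nonneg fun k => sq_nonneg _
  have hT2f0 : 0 ≤ T2f := tsum_nonneg fun k => sq_nonneg _
  have hTG10 : 0 ≤ TG1 := tsum_nonneg fun k => sq_nonneg _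
  have hTG20 : 0 ≤ TG2 := tsum_nonneg fun k => sq_nonneg _
  set e₁ := 2 * (6 * 2 ^ r) * Real.sqrt γ₁ * Real.sqrt T1f * Real.sqrt TG1 with he₁
  set e₂ := 2 * 2 ^ r * Real.sqrt γ₂ * Real.sqrt T2f * Real.sqrt TG2 with he₂
  have he₁0 : 0 ≤ e₁ := by positivity
  have he₂0 : 0 ≤ e₂ := by positivity
  have hRHS : 4 * ENNReal.ofReal (6 * 2 ^ r) ^ 2 *
        (ENNReal.ofReal γ₁ * ENNReal.ofReal T1f * ENNReal.ofReal TG1) +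
      4 * ENNReal.ofReal (2 ^ r) ^ 2 *
        (ENNReal.ofReal γ₂ * ENNReal.ofReal TG2 * ENNReal.ofReal T2f) =
      ENNReal.ofReal (e₁^2 + e₂^2) := by
    have h1 : e₁^2 = 4 * (6 * 2 ^ r)^2 * γ₁ * T1f * TG1 := by
      rw [he₁]
      rw [mul_pow, mul_pow, mul_pow, mul_pow, Real.sq_sqrt hγ₁0, Real.sq_sqrt hT1f0,
        Real.sq_sqrt hTG10]
      ring
    have h2 : e₂^2 = 4 * (2 ^ r)^2 * γ₂ * TG2 * T2f := by
      rw [he₂]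
      rw [mul_pow, mul_pow, mul_pow, mul_pow, Real.sq_sqrt hγ₂0, Real.sq_sqrt hT2f0,
        Real.sq_sqrt hTG20]
      ring
    rw [ENNReal.ofReal_add (by positivity) (by positivity), h1, h2,
        ofReal_prod5 _ _ _ _ _ (by norm_num) (by positivity) hγ₁0 hT1f0,
        ofReal_prod5 _ _ _ _ _ (by norm_num) (by positivity) hγ₂0 hTG20,
        ENNReal.ofReal_pow (show (0:ℝ) ≤ 6 * 2 ^ r by positivity),
        ENNReal.ofReal_pow h2r.le, ENNReal.ofReal_ofNat]
    ring
  rw [hRHS] at hstepL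
  -- back to reals
  have hfin : (∑' k : ℤ, (ENNReal.ofReal (jap k ^ r *
      ‖gevreyCommCoef τ f g k‖)) ^ 2) ≠ ⊤ :=
    (lt_of_le_of_lt hstepL ENNReal.ofReal_lt_top).ne
  have hLnn : ∀ k : ℤ, 0 ≤ jap k ^ r * ‖gevreyCommCoef τ f g k‖ :=
    fun k => mul_nonneg (jap_rpow_nonneg k r) (norm_nonneg _)
  have hLsum : Summable (fun k : ℤ =>
      (jap k ^ r * ‖gevreyCommCoef τ f g k‖) ^ 2) := by
    refine (ENNReal.summable_toReal hfin).congr fun k => ?_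
    rw [← ENNReal.ofReal_pow (hLnn k), ENNReal.toReal_ofReal (sq_nonneg _)]
  have hreal : (∑' k : ℤ, (jap k ^ r * ‖gevreyCommCoef τ f g k‖) ^ 2) ≤
      e₁^2 + e₂^2 := by
    rw [← ENNReal.ofReal_le_ofReal_iff (by positivity)]
    calc ENNReal.ofReal (∑' k : ℤ, (jap k ^ r * ‖gevreyCommCoef τ f g k‖) ^ 2)
        = ∑' k : ℤ, (ENNReal.ofReal (jap k ^ r * ‖gevreyCommCoef τ f g k‖)) ^ 2 := by
          rw [ENNReal.ofReal_tsum_of_nonneg (fun k => sq_nonneg _) hLsum]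
          exact tsum_congr fun k => ENNReal.ofReal_pow (hLnn k) 2
      _ ≤ ENNReal.ofReal (e₁^2 + e₂^2) := hstepL
  -- finish
  have hXnorm1 : Xnorm τ s₁ f = Real.sqrt T1f := rfl
  have hXnorm2 : Xnorm τ (r + 2/3) g = Real.sqrt TG1 := rfl
  have hXnorm3 : Xnorm τ (r + 1 - δ) f = Real.sqrt T2f := rfl
  have hXnorm4 : Xnorm τ (s + δ) g = Real.sqrt TG2 := rfl
  rw [hXnorm1, hXnorm2, hXnorm3, hXnorm4]
  calc Real.sqrt (∑' k : ℤ, (jap k ^ r * ‖gevreyCommCoef τ f g k‖) ^ 2)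
      ≤ Real.sqrt ((e₁ + e₂)^2) := by
        apply Real.sqrt_le_sqrt
        nlinarith [he₁0, he₂0, hreal]
    _ = e₁ + e₂ := Real.sqrt_sq (add_nonneg he₁0 he₂0)
    _ ≤ (2 * (6 * 2 ^ r) * Real.sqrt γ₁ + 2 * 2 ^ r * Real.sqrt γ₂ + 1) *
          Real.sqrt T1f * Real.sqrt TG1 +
        (2 * (6 * 2 ^ r) * Real.sqrt γ₁ + 2 * 2 ^ r * Real.sqrt γ₂ + 1) *
          Real.sqrt T2f * Real.sqrt TG2 := by
        have hc1 : 0 ≤ 2 * (6 * 2 ^ r) * Real.sqrt γ₁ :=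
          mul_nonneg (by positivity) hsγ₁
        have hc2 : 0 ≤ 2 * 2 ^ r * Real.sqrt γ₂ :=
          mul_nonneg (by positivity) hsγ₂
        apply add_le_add
        · rw [he₁]
          apply mul_le_mul_of_nonneg_right _ (Real.sqrt_nonneg TG1)
          apply mul_le_mul_of_nonneg_right _ (Real.sqrt_nonneg T1f)
          linarith
        · rw [he₂]
          apply mul_le_mul_of_nonneg_right _ (Real.sqrt_nonneg TG2)
          apply mul_le_mul_of_nonneg_right _ (Real.sqrt_nonneg T2f)
          linarith
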